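/- Let G be an infinite discrete group and let μ be an irreducible probability measure on G. Then for every g ∈ G, μ^{⋆n}({g}) → 0 as n → ∞. -/

import Mathlib

open Filter Topology
open scoped Classical

variable {G : Type*}

/-- Convolution of two summable "measures" (functions) on a discrete group:
`(ν ⋆ μ)(g) = ∑_{a·b=g} ν(a) μ(b)`. -/
noncomputable def mconv [Group G] (ν μ : G → ℝ) : G → ℝ :=
  fun g => ∑' a : G, ν a * μ (a⁻¹ * g)

/-- The `n`-th convolution power of `μ`, with `convPow μ 0 = δ_e` and `convPow μ 1 = μ`. -/
noncomputable def convPow [Group G] (μ : G → ℝ) : ℕ → G → ℝ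
  | 0 => fun g => if g = 1 then 1 else 0
  | n + 1 => mconv (convPow μ n) μ

/-- `μ` is a probability measure on the discrete group `G`. -/
def IsProbMeas [Group G] (μ : G → ℝ) : Prop :=
  (∀ g, 0 ≤ μ g) ∧ HasSum μ 1

/-- `μ` is irreducible: every point is charged by some convolution power `μ^{⋆n}`, `n ≥ 1`. -/
def MeasIrreducible [Group G] (μ : G → ℝ) : Prop :=
  ∀ g : G, ∃ n : ℕ, 1 ≤ n ∧ 0 < convPow μ n g

/-- The convolution action of a measure `μ` on a function `f ∈ c₀(G)`:
`(f ⋆ μ)(g) = ∑_h f(g·h) μ(h)`. -/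
noncomputable def actConv [Group G] (f : G → ℂ) (μ : G → ℝ) : G → ℂ :=
  fun g => ∑' h : G, f (g * h) * (μ h : ℂ)

/-- A function on a discrete space vanishes at infinity iff it tends to `0`
along the cofinite filter. -/
def ZeroAtInfty (f : G → ℂ) : Prop := Tendsto f cofinite (𝓝 0)

section aux
set_option linter.unusedSectionVars false
variable [Group G] {μ : G → ℝ}

private lemma tsum_translate (μ : G → ℝ) (a : G) : ∑' g, μ (a * g) = ∑' g, μ g :=
  Equiv.tsum_eq (Equiv.mulLeft a) μ

private lemma tsum_translate_right (μ : G → ℝ) (a : G) : ∑' g, μ (g * a) = ∑' g, μ g :=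
  Equiv.tsum_eq (Equiv.mulRight a) μ

private lemma summable_translate (h : Summable μ) (a : G) : Summable fun g => μ (a * g) :=
  (Equiv.mulLeft a).summable_iff.mpr h

private lemma summable_translate_right (h : Summable μ) (a : G) : Summable fun g => μ (g * a) :=
  (Equiv.mulRight a).summable_iff.mpr h

private lemma convPow_prob (hμ : IsProbMeas μ) : ∀ n, IsProbMeas (convPow μ n) := by
  intro n; induction n with
  | zero =>
    constructor
    · intro g; by_cases h : g = 1 <;> simp [convPow, h]
    · exact hasSum_ite_eq 1 1
  | succ n ih =>
    obtain ⟨hf0, hf⟩ := ih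
    set f := convPow μ n with hfdef
    set Q : G × G → ℝ := fun p => f p.1 * μ (p.1⁻¹ * p.2) with hQdef
    have hQ0 : ∀ p, 0 ≤ Q p := fun p => mul_nonneg (hf0 _) (hμ.1 _)
    have rows : ∀ a, Summable fun g => Q (a, g) :=
      fun a => (summable_translate hμ.2.summable a⁻¹).mul_left (f a)
    have rowsum : ∀ a, ∑' g, Q (a, g) = f a := by
      intro a
      simp only [hQdef, tsum_mul_left, tsum_translate μ a⁻¹, hμ.2.tsum_eq, mul_one]
    have hQ : Summable Q := by
      refine (summable_prod_of_nonneg hQ0).mpr ⟨rows, ?_⟩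
      exact hf.summable.congr fun a => (rowsum a).symm
    have tsumQ : ∑' p, Q p = 1 := by
      rw [Summable.tsum_prod hQ]
      simp only [rowsum]
      exact hf.tsum_eq
    have hQ' : Summable fun p : G × G => Q p.swap := hQ.prod_symm
    have hmarg : Summable fun g => ∑' a, Q (a, g) :=
      ((summable_prod_of_nonneg fun p => hQ0 p.swap).mp hQ').2
    have hconv : convPow μ (n + 1) = fun g => ∑' a, Q (a, g) := rfl
    constructor
    · intro g; rw [hconv]; exact tsum_nonneg fun a => hQ0 (a, g)
    · rw [hconv]
      refine hmarg.hasSum_iff.mpr ?_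
      calc ∑' g, ∑' a, Q (a, g) = ∑' p : G × G, Q p.swap := (Summable.tsum_prod hQ').symm
        _ = ∑' p, Q p := Equiv.tsum_eq (Equiv.prodComm G G) Q
        _ = 1 := tsumQ

private lemma convPow_nonneg (hμ : IsProbMeas μ) (n : ℕ) (g : G) : 0 ≤ convPow μ n g :=
  (convPow_prob hμ n).1 g

private lemma convPow_summable (hμ : IsProbMeas μ) (n : ℕ) : Summable (convPow μ n) :=
  (convPow_prob hμ n).2.summable

private lemma convPow_le_one (hμ : IsProbMeas μ) (n : ℕ) (g : G) : convPow μ n g ≤ 1 :=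
  le_hasSum (convPow_prob hμ n).2 g fun j _ => convPow_nonneg hμ n j

private lemma convPow_one_eq (μ : G → ℝ) : convPow μ 1 = μ := by
  funext g
  show ∑' a : G, (if a = 1 then (1:ℝ) else 0) * μ (a⁻¹ * g) = μ g
  rw [tsum_eq_single 1 (by intro b hb; simp [hb])]
  simp


private lemma convPow_hasSum (hμ : IsProbMeas μ) (n : ℕ) : HasSum (convPow μ n) 1 :=
  (convPow_prob hμ n).2

private lemma convPow_tsum_one (hμ : IsProbMeas μ) (n : ℕ) : ∑' g, convPow μ n g = 1 :=
  (convPow_prob hμ n).2.tsum_eq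

private lemma convPow_succ_eq (μ : G → ℝ) (n : ℕ) (g : G) :
    convPow μ (n + 1) g = ∑' b, convPow μ n b * μ (b⁻¹ * g) := rfl

private lemma hinner (μ : G → ℝ) (m : ℕ) (a g : G) :
    ∑' b, convPow μ m (a⁻¹ * b) * μ (b⁻¹ * g) = convPow μ (m + 1) (a⁻¹ * g) := by
  rw [convPow_succ_eq]
  rw [← Equiv.tsum_eq (Equiv.mulLeft a) (fun b => convPow μ m (a⁻¹ * b) * μ (b⁻¹ * g))]
  simp [mul_assoc, mul_inv_rev]

private lemma convPow_add (hμ : IsProbMeas μ) (n : ℕ) :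
    ∀ (k : ℕ) (g : G), convPow μ (n + k) g = ∑' a, convPow μ n a * convPow μ k (a⁻¹ * g) := by
  intro k
  induction k with
  | zero =>
    intro g
    rw [Nat.add_zero]
    rw [tsum_eq_single g (by
      intro b hb
      have : ¬ (b⁻¹ * g = 1) := fun h => hb (by
        have := congrArg (fun z => b * z) h
        simpa [mul_assoc] using this.symm)
      show convPow μ n b * convPow μ 0 (b⁻¹ * g) = 0
      simp [convPow, this])]
    simp [convPow]
  | succ k ih =>
    intro g
    set f := convPow μ
    set W : G × G → ℝ := fun p => f n p.1 * (f k (p.1⁻¹ * p.2) * μ (p.2⁻¹ * g)) with hW0def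
    have hW0 : ∀ p, 0 ≤ W p := fun p =>
      mul_nonneg (convPow_nonneg hμ n _) (mul_nonneg (convPow_nonneg hμ k _) (hμ.1 _))
    have rows : ∀ a, Summable fun b => W (a, b) := by
      intro a
      refine Summable.of_nonneg_of_le (fun b => hW0 (a, b)) (fun b => ?_)
        (((summable_translate (convPow_summable hμ k) a⁻¹)).mul_left (f n a))
      refine mul_le_mul_of_nonneg_left ?_ (convPow_nonneg hμ n a)
      exact mul_le_of_le_one_right (convPow_nonneg hμ k _) (le_hasSum hμ.2 _ fun j _ => hμ.1 j)
    have rowsum : ∀ a, ∑' b, W (a, b) = f n a * f (k + 1) (a⁻¹ * g) := by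
      intro a
      show ∑' b, f n a * (f k (a⁻¹ * b) * μ (b⁻¹ * g)) = _
      rw [tsum_mul_left, hinner μ k a g]
    have hW : Summable W := by
      refine (summable_prod_of_nonneg hW0).mpr ⟨rows, ?_⟩
      refine Summable.of_nonneg_of_le (fun a => ?_) (fun a => ?_) (convPow_summable hμ n)
      · rw [rowsum a]; exact mul_nonneg (convPow_nonneg hμ n a) (convPow_nonneg hμ (k+1) _)
      · rw [rowsum a]
        exact mul_le_of_le_one_right (convPow_nonneg hμ n a) (convPow_le_one hμ (k+1) _)
    have swap_eq : ∑' b, ∑' a, W (a, b) = ∑' a, ∑' b, W (a, b) :=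
      Summable.tsum_comm hW
    calc convPow μ (n + (k + 1)) g = ∑' b, f (n + k) b * μ (b⁻¹ * g) := rfl
      _ = ∑' b, (∑' a, f n a * f k (a⁻¹ * b)) * μ (b⁻¹ * g) := by
          congr 1; funext b; rw [ih b]
      _ = ∑' b, ∑' a, W (a, b) := by
          congr 1; funext b
          rw [← tsum_mul_right]
          congr 1; funext a
          show f n a * f k (a⁻¹ * b) * μ (b⁻¹ * g) = f n a * (f k (a⁻¹ * b) * μ (b⁻¹ * g))
          ring
      _ = ∑' a, ∑' b, W (a, b) := swap_eq
      _ = ∑' a, f n a * f (k + 1) (a⁻¹ * g) := by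
          congr 1; funext a; exact rowsum a

private lemma convPow_add_right (hμ : IsProbMeas μ) (n k : ℕ) (g : G) :
    convPow μ (n + k) g = ∑' h, convPow μ n (g * h⁻¹) * convPow μ k h := by
  rw [convPow_add hμ n k g]
  rw [← Equiv.tsum_eq ((Equiv.inv G).trans (Equiv.mulLeft g))
    (fun a => convPow μ n a * convPow μ k (a⁻¹ * g))]
  congr 1; funext h
  simp [mul_assoc, mul_inv_rev]

/-- squared ℓ² norm of the n-th convolution power -/
private noncomputable def l2 [Group G] (μ : G → ℝ) (n : ℕ) : ℝ :=
  ∑' g, (convPow μ n g) ^ 2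

private noncomputable def crossC [Group G] (μ : G → ℝ) (n k : ℕ) (h : G) : ℝ :=
  ∑' g, convPow μ (n + k) g * convPow μ n (g * h⁻¹)

private noncomputable def delta [Group G] (μ : G → ℝ) (n k : ℕ) (h : G) : ℝ :=
  ∑' g, (convPow μ (n + k) g - convPow μ n (g * h⁻¹)) ^ 2

private lemma summable_sq' {u : G → ℝ} (h : Summable u) (h0 : ∀ g, 0 ≤ u g)
    (h1 : ∀ g, u g ≤ 1) : Summable fun g => (u g) ^ 2 :=
  Summable.of_nonneg_of_le (fun g => sq_nonneg _) (fun g => by nlinarith [h0 g, h1 g]) h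

private lemma summable_convPow_sq (hμ : IsProbMeas μ) (n : ℕ) :
    Summable fun g => (convPow μ n g) ^ 2 :=
  summable_sq' (convPow_summable hμ n) (convPow_nonneg hμ n) (convPow_le_one hμ n)

private lemma summable_convPow_sq_tr (hμ : IsProbMeas μ) (n : ℕ) (s : G) :
    Summable fun g => (convPow μ n (g * s)) ^ 2 :=
  summable_sq' (summable_translate_right (convPow_summable hμ n) s)
    (fun g => convPow_nonneg hμ n _) (fun g => convPow_le_one hμ n _)

private lemma tsum_convPow_sq_tr (hμ : IsProbMeas μ) (n : ℕ) (s : G) :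
    ∑' g, (convPow μ n (g * s)) ^ 2 = l2 μ n :=
  tsum_translate_right (fun g => (convPow μ n g) ^ 2) s

private lemma summable_cross (hμ : IsProbMeas μ) (m n : ℕ) (s : G) :
    Summable fun g => convPow μ m g * convPow μ n (g * s) := by
  refine Summable.of_nonneg_of_le
    (fun g => mul_nonneg (convPow_nonneg hμ m g) (convPow_nonneg hμ n _))
    (fun g => mul_le_of_le_one_right (convPow_nonneg hμ m g) (convPow_le_one hμ n _))
    (convPow_summable hμ m)

private lemma crossC_le_one (hμ : IsProbMeas μ) (n k : ℕ) (h : G) :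
    crossC μ n k h ≤ 1 := by
  have : ∀ g, convPow μ (n + k) g * convPow μ n (g * h⁻¹) ≤ convPow μ (n + k) g :=
    fun g => mul_le_of_le_one_right (convPow_nonneg hμ (n+k) g) (convPow_le_one hμ n _)
  calc crossC μ n k h ≤ ∑' g, convPow μ (n + k) g :=
        Summable.tsum_le_tsum this (summable_cross hμ (n+k) n h⁻¹) (convPow_summable hμ (n+k))
    _ = 1 := convPow_tsum_one hμ (n+k)

private lemma crossC_nonneg (hμ : IsProbMeas μ) (n k : ℕ) (h : G) : 0 ≤ crossC μ n k h :=
  tsum_nonneg fun g => mul_nonneg (convPow_nonneg hμ _ _) (convPow_nonneg hμ _ _)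

private lemma summable_nu_cross (hμ : IsProbMeas μ) (n k : ℕ) :
    Summable fun h => convPow μ k h * crossC μ n k h := by
  refine Summable.of_nonneg_of_le
    (fun h => mul_nonneg (convPow_nonneg hμ k h) (crossC_nonneg hμ n k h))
    (fun h => mul_le_of_le_one_right (convPow_nonneg hμ k h) (crossC_le_one hμ n k h))
    (convPow_summable hμ k)

/-- key Fubini identity: `∑ ν(h) c(h) = ‖f_{n+k}‖²` -/
private lemma tsum_nu_cross (hμ : IsProbMeas μ) (n k : ℕ) :
    ∑' h, convPow μ k h * crossC μ n k h = l2 μ (n + k) := by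
  set u := convPow μ (n + k)
  set v := convPow μ n
  set ν := convPow μ k
  set V : G × G → ℝ := fun p => ν p.1 * (u p.2 * v (p.2 * p.1⁻¹)) with hVdef
  have hV0 : ∀ p, 0 ≤ V p := fun p => mul_nonneg (convPow_nonneg hμ k _)
    (mul_nonneg (convPow_nonneg hμ (n+k) _) (convPow_nonneg hμ n _))
  have rows : ∀ h, Summable fun g => V (h, g) :=
    fun h => (summable_cross hμ (n+k) n h⁻¹).mul_left (ν h)
  have rowsum : ∀ h, ∑' g, V (h, g) = ν h * crossC μ n k h := by
    intro h
    show ∑' g, ν h * (u g * v (g * h⁻¹)) = ν h * crossC μ n k h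
    rw [tsum_mul_left]; rfl
  have hV : Summable V := by
    refine (summable_prod_of_nonneg hV0).mpr ⟨rows, ?_⟩
    exact (summable_nu_cross hμ n k).congr fun h => (rowsum h).symm
  have swap_eq : ∑' g, ∑' h, V (h, g) = ∑' h, ∑' g, V (h, g) := Summable.tsum_comm hV
  have colsum : ∀ g, ∑' h, V (h, g) = u g ^ 2 := by
    intro g
    have : ∀ h, V (h, g) = u g * (v (g * h⁻¹) * ν h) := by intro h; simp [hVdef]; ring
    rw [tsum_congr this, tsum_mul_left, ← convPow_add_right hμ n k g, sq]
  calc ∑' h, ν h * crossC μ n k h = ∑' h, ∑' g, V (h, g) := by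
        exact tsum_congr fun h => (rowsum h).symm
    _ = ∑' g, ∑' h, V (h, g) := swap_eq.symm
    _ = ∑' g, u g ^ 2 := tsum_congr colsum
    _ = l2 μ (n + k) := rfl

/-- expansion of the squared difference -/
private lemma delta_eq (hμ : IsProbMeas μ) (n k : ℕ) (h : G) :
    delta μ n k h = l2 μ (n + k) + l2 μ n - 2 * crossC μ n k h := by
  have hu2 := summable_convPow_sq hμ (n + k)
  have hv2 := summable_convPow_sq_tr hμ n h⁻¹
  have hc := summable_cross hμ (n + k) n h⁻¹
  have expand : ∀ g, (convPow μ (n+k) g - convPow μ n (g * h⁻¹)) ^ 2 =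
      ((convPow μ (n+k) g) ^ 2 + (convPow μ n (g * h⁻¹)) ^ 2)
        - 2 * (convPow μ (n+k) g * convPow μ n (g * h⁻¹)) := by intro g; ring
  rw [delta, tsum_congr expand, Summable.tsum_sub (hu2.add hv2) (hc.mul_left 2),
    Summable.tsum_add hu2 hv2, tsum_mul_left, tsum_convPow_sq_tr hμ n h⁻¹]
  rfl

private lemma delta_nonneg (n k : ℕ) (h : G) : 0 ≤ delta μ n k h :=
  tsum_nonneg fun g => sq_nonneg _

private lemma summable_nu_delta (hμ : IsProbMeas μ) (n k : ℕ) :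
    Summable fun h => convPow μ k h * delta μ n k h := by
  have : ∀ h, convPow μ k h * delta μ n k h =
      convPow μ k h * (l2 μ (n+k) + l2 μ n) - 2 * (convPow μ k h * crossC μ n k h) := by
    intro h; rw [delta_eq hμ n k h]; ring
  refine Summable.congr ?_ (fun h => (this h).symm)
  exact ((convPow_summable hμ k).mul_right _).sub ((summable_nu_cross hμ n k).mul_left 2)

/-- THE key identity: `∑ ν(h) Δ(h) = ‖f_n‖² - ‖f_{n+k}‖²` -/
private lemma tsum_nu_delta (hμ : IsProbMeas μ) (n k : ℕ) :
    ∑' h, convPow μ k h * delta μ n k h = l2 μ n - l2 μ (n + k) := by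
  have e1 : ∀ h, convPow μ k h * delta μ n k h =
      convPow μ k h * (l2 μ (n+k) + l2 μ n) - 2 * (convPow μ k h * crossC μ n k h) := by
    intro h; rw [delta_eq hμ n k h]; ring
  rw [tsum_congr e1, Summable.tsum_sub ((convPow_summable hμ k).mul_right _)
    ((summable_nu_cross hμ n k).mul_left 2), tsum_mul_right, tsum_mul_left,
    convPow_tsum_one hμ k, tsum_nu_cross hμ n k]
  ring

private lemma l2_add_le (hμ : IsProbMeas μ) (n k : ℕ) : l2 μ (n + k) ≤ l2 μ n := by
  have h0 : 0 ≤ ∑' h, convPow μ k h * delta μ n k h :=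
    tsum_nonneg fun h => mul_nonneg (convPow_nonneg hμ k h) (delta_nonneg n k h)
  rw [tsum_nu_delta hμ n k] at h0
  linarith

private lemma l2_antitone (hμ : IsProbMeas μ) : Antitone (l2 μ) := by
  intro a b hab
  obtain ⟨k, rfl⟩ := Nat.exists_eq_add_of_le hab
  exact l2_add_le hμ a k

private lemma nu_delta_le (hμ : IsProbMeas μ) (n k : ℕ) (h₀ : G) :
    convPow μ k h₀ * delta μ n k h₀ ≤ l2 μ n - l2 μ (n + k) := by
  rw [← tsum_nu_delta hμ n k]
  exact Summable.le_tsum (summable_nu_delta hμ n k) h₀ fun j _ =>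
    mul_nonneg (convPow_nonneg hμ k j) (delta_nonneg n k j)

private lemma l2_nonneg (μ : G → ℝ) (n : ℕ) : 0 ≤ l2 μ n := tsum_nonneg fun g => sq_nonneg _

private lemma l2_diff_tendsto (hμ : IsProbMeas μ) (k : ℕ) :
    Tendsto (fun n => l2 μ n - l2 μ (n + k)) atTop (𝓝 0) := by
  have hbdd : BddBelow (Set.range (l2 μ)) := by
    refine ⟨0, ?_⟩; rintro y ⟨n, rfl⟩; exact l2_nonneg μ n
  have hL : Tendsto (l2 μ) atTop (𝓝 (⨅ n, l2 μ n)) :=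
    tendsto_atTop_ciInf (l2_antitone hμ) hbdd
  have hL2 : Tendsto (fun n => l2 μ (n + k)) atTop (𝓝 (⨅ n, l2 μ n)) :=
    hL.comp (tendsto_add_atTop_nat k)
  simpa using hL.sub hL2

private lemma delta_tendsto (hμ : IsProbMeas μ) (k : ℕ) (h₀ : G)
    (hpos : 0 < convPow μ k h₀) :
    Tendsto (fun n => delta μ n k h₀) atTop (𝓝 0) := by
  have hb : ∀ n, delta μ n k h₀ ≤ (l2 μ n - l2 μ (n + k)) * (convPow μ k h₀)⁻¹ := by
    intro n
    rw [← div_eq_mul_inv, le_div_iff₀ hpos]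
    calc delta μ n k h₀ * convPow μ k h₀ = convPow μ k h₀ * delta μ n k h₀ := by ring
      _ ≤ l2 μ n - l2 μ (n + k) := nu_delta_le hμ n k h₀
  have ht : Tendsto (fun n => (l2 μ n - l2 μ (n + k)) * (convPow μ k h₀)⁻¹) atTop (𝓝 0) := by
    simpa using (l2_diff_tendsto hμ k).mul_const (convPow μ k h₀)⁻¹
  exact squeeze_zero (fun n => delta_nonneg n k h₀) hb ht

/-- `e n s = ∑ (f_n(g) - f_n(gs))²` -/
noncomputable def ediff [Group G] (μ : G → ℝ) (n : ℕ) (s : G) : ℝ :=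
  ∑' g, (convPow μ n g - convPow μ n (g * s)) ^ 2

private lemma summable_diff_sq {u v : G → ℝ} (hu : Summable fun g => (u g) ^ 2)
    (hv : Summable fun g => (v g) ^ 2) : Summable fun g => (u g - v g) ^ 2 := by
  refine Summable.of_nonneg_of_le (fun g => sq_nonneg _) (fun g => ?_)
    ((hu.mul_left 2).add (hv.mul_left 2))
  nlinarith [sq_nonneg (u g + v g)]

private lemma summable_ediff_term (hμ : IsProbMeas μ) (n : ℕ) (s : G) :
    Summable fun g => (convPow μ n g - convPow μ n (g * s)) ^ 2 :=
  summable_diff_sq (summable_convPow_sq hμ n) (summable_convPow_sq_tr hμ n s)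

private lemma ediff_nonneg (μ : G → ℝ) (n : ℕ) (s : G) : 0 ≤ ediff μ n s :=
  tsum_nonneg fun g => sq_nonneg _

private lemma ediff_inv (μ : G → ℝ) (n : ℕ) (s : G) : ediff μ n s⁻¹ = ediff μ n s := by
  unfold ediff
  rw [← Equiv.tsum_eq (Equiv.mulRight s) (fun g => (convPow μ n g - convPow μ n (g * s⁻¹)) ^ 2)]
  refine tsum_congr fun c => ?_
  simp only [Equiv.coe_mulRight, mul_inv_cancel_right]
  ring

private lemma ediff_tr (μ : G → ℝ) (n : ℕ) (s t : G) :
    ∑' g, (convPow μ n (g * s) - convPow μ n (g * s * t)) ^ 2 = ediff μ n t := by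
  unfold ediff
  rw [← Equiv.tsum_eq (Equiv.mulRight s) (fun g => (convPow μ n g - convPow μ n (g * t)) ^ 2)]
  rfl

private lemma ediff_mul_le (hμ : IsProbMeas μ) (n : ℕ) (s t : G) :
    ediff μ n (s * t) ≤ 2 * ediff μ n s + 2 * ediff μ n t := by
  have hmid : Summable fun g => (convPow μ n (g * s) - convPow μ n (g * s * t)) ^ 2 := by
    have := summable_diff_sq (summable_convPow_sq_tr hμ n s)
      (summable_convPow_sq_tr hμ n (s * t))
    exact this.congr fun g => by rw [mul_assoc]
  have hsum : Summable fun g => 2 * (convPow μ n g - convPow μ n (g * s)) ^ 2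
      + 2 * (convPow μ n (g * s) - convPow μ n (g * s * t)) ^ 2 :=
    ((summable_ediff_term hμ n s).mul_left 2).add (hmid.mul_left 2)
  have hle : ediff μ n (s * t) ≤ ∑' g, (2 * (convPow μ n g - convPow μ n (g * s)) ^ 2
      + 2 * (convPow μ n (g * s) - convPow μ n (g * s * t)) ^ 2) := by
    refine Summable.tsum_le_tsum (fun g => ?_) (summable_ediff_term hμ n (s * t)) hsum
    have : g * (s * t) = g * s * t := by rw [mul_assoc]
    rw [this]
    nlinarith [sq_nonneg (convPow μ n g + convPow μ n (g * s * t) - 2 * convPow μ n (g * s))]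
  rw [Summable.tsum_add ((summable_ediff_term hμ n s).mul_left 2) (hmid.mul_left 2),
    tsum_mul_left, tsum_mul_left, ediff_tr μ n s t] at hle
  exact hle

/-- The subgroup of asymptotic invariance directions. -/
noncomputable def Tsub [Group G] (μ : G → ℝ) (hμ : IsProbMeas μ) : Subgroup G where
  carrier := {s | Tendsto (fun n => ediff μ n s) atTop (𝓝 0)}
  one_mem' := by
    have : ∀ n, ediff μ n 1 = 0 := by
      intro n; unfold ediff; simp
    simpa [this] using tendsto_const_nhds (α := ℝ) (f := atTop (α := ℕ))
  inv_mem' := by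
    intro s hs
    simpa [ediff_inv] using hs
  mul_mem' := by
    intro s t hs ht
    refine squeeze_zero (fun n => ediff_nonneg μ n _) (fun n => ediff_mul_le hμ n s t) ?_
    have := (hs.const_mul 2).add (ht.const_mul 2)
    simpa using this

/-- membership in `Tsub` for pairs from the support of some convolution power -/
private lemma DinT (hμ : IsProbMeas μ) (k : ℕ) (h h' : G)
    (hh : 0 < convPow μ k h) (hh' : 0 < convPow μ k h') : h * h'⁻¹ ∈ Tsub μ hμ := by
  have key : ∀ n, ediff μ n (h * h'⁻¹) ≤ 2 * delta μ n k h + 2 * delta μ n k h' := by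
    intro n
    set v := convPow μ n
    set u := convPow μ (n + k)
    have hd1 : Summable fun g => (u g - v (g * h⁻¹)) ^ 2 :=
      summable_diff_sq (summable_convPow_sq hμ (n+k)) (summable_convPow_sq_tr hμ n h⁻¹)
    have hd2 : Summable fun g => (u g - v (g * h'⁻¹)) ^ 2 :=
      summable_diff_sq (summable_convPow_sq hμ (n+k)) (summable_convPow_sq_tr hμ n h'⁻¹)
    have hmix : Summable fun g => (v (g * h⁻¹) - v (g * h'⁻¹)) ^ 2 :=
      summable_diff_sq (summable_convPow_sq_tr hμ n h⁻¹) (summable_convPow_sq_tr hμ n h'⁻¹)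
    have step1 : ∑' g, (v (g * h⁻¹) - v (g * h'⁻¹)) ^ 2
        ≤ 2 * delta μ n k h + 2 * delta μ n k h' := by
      have hsum : Summable fun g => 2 * (u g - v (g * h⁻¹)) ^ 2 + 2 * (u g - v (g * h'⁻¹)) ^ 2 :=
        (hd1.mul_left 2).add (hd2.mul_left 2)
      have hle : ∑' g, (v (g * h⁻¹) - v (g * h'⁻¹)) ^ 2
          ≤ ∑' g, (2 * (u g - v (g * h⁻¹)) ^ 2 + 2 * (u g - v (g * h'⁻¹)) ^ 2) := by
        refine Summable.tsum_le_tsum (fun g => ?_) hmix hsum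
        nlinarith [sq_nonneg (v (g * h⁻¹) + v (g * h'⁻¹) - 2 * u g)]
      rwa [Summable.tsum_add (hd1.mul_left 2) (hd2.mul_left 2), tsum_mul_left, tsum_mul_left] at hle
    have step2 : ediff μ n (h * h'⁻¹) = ∑' g, (v (g * h⁻¹) - v (g * h'⁻¹)) ^ 2 := by
      unfold ediff
      rw [← Equiv.tsum_eq (Equiv.mulRight h⁻¹)
        (fun g => (convPow μ n g - convPow μ n (g * (h * h'⁻¹))) ^ 2)]
      refine tsum_congr fun c => ?_
      have : c * h⁻¹ * (h * h'⁻¹) = c * h'⁻¹ := by group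
      simp only [Equiv.coe_mulRight, this]; rfl
    rw [step2]; exact step1
  have hlim : Tendsto (fun n => 2 * delta μ n k h + 2 * delta μ n k h') atTop (𝓝 0) := by
    have := ((delta_tendsto hμ k h hh).const_mul 2).add ((delta_tendsto hμ k h' hh').const_mul 2)
    simpa using this
  exact squeeze_zero (fun n => ediff_nonneg μ n _) key hlim


private lemma Tsub_mem (hμ : IsProbMeas μ) (s : G) :
    s ∈ Tsub μ hμ ↔ Tendsto (fun n => ediff μ n s) atTop (𝓝 0) := Iff.rfl

/-- the infinite-`Tsub` case -/
private lemma tendsto_of_Tsub_infinite (hμ : IsProbMeas μ)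
    (hinf : ((Tsub μ hμ : Subgroup G) : Set G).Infinite) (g : G) :
    Tendsto (fun n : ℕ => convPow μ n g) atTop (𝓝 0) := by
  by_contra hcon
  rw [Metric.tendsto_atTop] at hcon
  push_neg at hcon
  obtain ⟨ε, hε, hfreq⟩ := hcon
  -- choose M points
  obtain ⟨M, hM⟩ := exists_nat_gt (2 / ε)
  obtain ⟨t, htsub, htcard⟩ := hinf.exists_subset_card_eq M
  -- eventually all ediffs are small
  have hev : ∀ᶠ n in atTop, ∀ s ∈ t, ediff μ n s < (ε / 2) ^ 2 := by
    rw [eventually_all_finset]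
    intro s hs
    have hmem : Tendsto (fun n => ediff μ n s) atTop (𝓝 0) :=
      (Tsub_mem hμ s).mp (htsub hs)
    exact hmem.eventually (gt_mem_nhds (by positivity))
  obtain ⟨N, hN⟩ := eventually_atTop.mp hev
  obtain ⟨n, hnN, hng⟩ := hfreq N
  have hfg : ε ≤ convPow μ n g := by
    have := hng
    rwa [Real.dist_eq, sub_zero, abs_of_nonneg (convPow_nonneg hμ n g)] at this
  -- each translate carries mass > ε/2
  have hbig : ∀ s ∈ t, ε / 2 < convPow μ n (g * s) := by
    intro s hs
    have h1 : (convPow μ n g - convPow μ n (g * s)) ^ 2 ≤ ediff μ n s :=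
      Summable.le_tsum (summable_ediff_term hμ n s) g fun j _ => sq_nonneg _
    have h2 : ediff μ n s < (ε / 2) ^ 2 := hN n hnN s hs
    nlinarith [convPow_nonneg hμ n (g * s)]
  -- sum over the distinct translates exceeds 1
  have hinj : Function.Injective fun s : G => g * s := mul_right_injective g
  have hsum_le : ∑ s ∈ t, convPow μ n (g * s) ≤ 1 := by
    have h1 : ∑ s ∈ t, convPow μ n (g * s) = ∑ x ∈ t.image (fun s => g * s), convPow μ n x :=
      (Finset.sum_image fun a _ b _ hab => hinj hab).symm
    rw [h1, ← (convPow_hasSum hμ n).tsum_eq]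
    exact Summable.sum_le_tsum _ (fun i _ => convPow_nonneg hμ n i) (convPow_summable hμ n)
  have hsum_gt : (M : ℝ) * (ε / 2) ≤ ∑ s ∈ t, convPow μ n (g * s) := by
    calc (M : ℝ) * (ε / 2) = ∑ _s ∈ t, (ε / 2) := by
          rw [Finset.sum_const, htcard, nsmul_eq_mul]
      _ ≤ ∑ s ∈ t, convPow μ n (g * s) :=
          Finset.sum_le_sum fun s hs => (hbig s hs).le
  have : (2 : ℝ) / ε * (ε / 2) < M * (ε / 2) :=
    mul_lt_mul_of_pos_right hM (by positivity)
  rw [div_mul_div_comm, mul_comm] at this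
  have h2 : (1 : ℝ) < M * (ε / 2) := by
    have : (ε * 2) / (ε * 2) < M * (ε / 2) := by
      rw [mul_comm ε 2] at this ⊢; exact this
    rwa [div_self (by positivity)] at this
  linarith

/-- the finite-`Tsub` case -/
private lemma tendsto_of_Tsub_finite [Infinite G] (hμ : IsProbMeas μ)
    (hirr : MeasIrreducible μ)
    (hfin : ((Tsub μ hμ : Subgroup G) : Set G).Finite) (g : G) :
    Tendsto (fun n : ℕ => convPow μ n g) atTop (𝓝 0) := by
  -- choose a point in the support of μ
  obtain ⟨x, hx⟩ : ∃ x, 0 < μ x := by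
    by_contra hcon
    push_neg at hcon
    have : ∀ x, μ x = 0 := fun x => le_antisymm (hcon x) (hμ.1 x)
    have h0 : HasSum μ 0 := by
      rw [show μ = fun _ => (0:ℝ) from funext this]
      exact hasSum_zero
    exact one_ne_zero (hμ.2.unique h0)
  -- positivity along powers of x
  have hx_all : ∀ n : ℕ, 0 < convPow μ n (x ^ n) := by
    intro n
    induction n with
    | zero => simp [convPow]
    | succ n ih =>
      have hterm : convPow μ n (x ^ n) * μ ((x ^ n)⁻¹ * x ^ (n + 1)) ≤ convPow μ (n + 1) (x ^ (n + 1)) := by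
        have hsummable : Summable fun b => convPow μ n b * μ (b⁻¹ * x ^ (n + 1)) := by
          refine Summable.of_nonneg_of_le
            (fun b => mul_nonneg (convPow_nonneg hμ n b) (hμ.1 _))
            (fun b => mul_le_of_le_one_right (convPow_nonneg hμ n b)
              (le_hasSum hμ.2 _ fun j _ => hμ.1 j))
            (convPow_summable hμ n)
        exact Summable.le_tsum hsummable (x ^ n) fun j _ =>
          mul_nonneg (convPow_nonneg hμ n j) (hμ.1 _)
      have heq : (x ^ n)⁻¹ * x ^ (n + 1) = x := by
        rw [pow_succ, inv_mul_cancel_left]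
      rw [heq] at hterm
      exact lt_of_lt_of_le (mul_pos ih hx) hterm
  -- supports lie in cosets of Tsub
  have hsupp : ∀ (n : ℕ) (u : G), 0 < convPow μ n u → u * (x ^ n)⁻¹ ∈ Tsub μ hμ :=
    fun n u hu => DinT hμ n u (x ^ n) hu (hx_all n)
  by_cases hj : ∃ j : ℕ, 1 ≤ j ∧ x ^ j ∈ Tsub μ hμ
  · -- G would be finite: contradiction
    exfalso
    obtain ⟨j, hj1, hjx⟩ := hj
    have hcover : (Set.univ : Set G) ⊆
        ⋃ r ∈ Finset.range j, (fun h : G => h * x ^ r) '' (Tsub μ hμ : Set G) := by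
      intro u _
      obtain ⟨n, hn1, hnu⟩ := hirr u
      have hmem : u * (x ^ n)⁻¹ ∈ Tsub μ hμ := hsupp n u hnu
      have hxpow : x ^ n = (x ^ j) ^ (n / j) * x ^ (n % j) := by
        rw [← pow_mul, ← pow_add, Nat.div_add_mod]
      refine Set.mem_biUnion (Finset.mem_coe.mpr (Finset.mem_range.mpr (Nat.mod_lt n hj1))) ?_
      refine ⟨u * (x ^ n)⁻¹ * (x ^ j) ^ (n / j), ?_, ?_⟩
      · exact mul_mem hmem (pow_mem hjx _)
      · show u * (x ^ n)⁻¹ * (x ^ j) ^ (n / j) * x ^ (n % j) = u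
        rw [mul_assoc, ← hxpow]; group
    have hfinU : (Set.univ : Set G).Finite := by
      refine Set.Finite.subset ?_ hcover
      refine Set.Finite.biUnion (Finset.range j).finite_toSet fun r _ => hfin.image _
    exact Set.infinite_univ hfinU
  · -- eventually zero at g
    push_neg at hj
    have hunique : ∀ n m : ℕ, 1 ≤ n → n < m → 0 < convPow μ n g → ¬ (0 < convPow μ m g) := by
      intro n m hn1 hnm hng hmg
      have ha : g * (x ^ n)⁻¹ ∈ Tsub μ hμ := hsupp n g hng
      have hb : g * (x ^ m)⁻¹ ∈ Tsub μ hμ := hsupp m g hmg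
      have hcomb : (g * (x ^ m)⁻¹)⁻¹ * (g * (x ^ n)⁻¹) ∈ Tsub μ hμ :=
        mul_mem (inv_mem hb) ha
      have hxmn : (g * (x ^ m)⁻¹)⁻¹ * (g * (x ^ n)⁻¹) = x ^ (m - n) := by
        have h1 : x ^ (m - n) * x ^ n = x ^ m := by
          rw [← pow_add, Nat.sub_add_cancel hnm.le]
        have h2 : x ^ (m - n) = x ^ m * (x ^ n)⁻¹ :=
          eq_mul_inv_of_mul_eq h1
        rw [h2]; group
      rw [hxmn] at hcomb
      exact hj (m - n) (by omega) hcomb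
    have hev : ∀ᶠ n in atTop, convPow μ n g = 0 := by
      by_cases hever : ∃ n : ℕ, 1 ≤ n ∧ 0 < convPow μ n g
      · obtain ⟨n₀, hn₀, hpos⟩ := hever
        rw [eventually_atTop]
        refine ⟨n₀ + 1, fun m hm => ?_⟩
        have := hunique n₀ m hn₀ (by omega) hpos
        exact le_antisymm (not_lt.mp this) (convPow_nonneg hμ m g)
      · push_neg at hever
        rw [eventually_atTop]
        refine ⟨1, fun m hm => ?_⟩
        exact le_antisymm (not_lt.mp fun h => (hever m hm).not_gt h) (convPow_nonneg hμ m g)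
    exact Tendsto.congr' (hev.mono fun n hn => hn.symm) tendsto_const_nhds

end aux

/-- For an infinite discrete group `G` and an irreducible probability
measure `μ`, the convolution powers converge to zero pointwise: `μ^{⋆n}({g}) → 0`. -/
theorem pointwise_to_zero [Group G] [Infinite G] (μ : G → ℝ)
    (hμ : IsProbMeas μ) (hirr : MeasIrreducible μ) (g : G) :
    Tendsto (fun n : ℕ => convPow μ n g) atTop (𝓝 0) := by
  rcases Set.finite_or_infinite ((Tsub μ hμ : Subgroup G) : Set G) with hfin | hinf
  · exact tendsto_of_Tsub_finite hμ hirr hfin g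
  · exact tendsto_of_Tsub_infinite hμ hinf g
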